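/- Let φ : ℕ → ℝ with φ(0) = 0 and φ(x) > 0 for x ≥ 1, let μ be a probability measure on (0,∞) such that Z_s < ∞ for μ-almost every s and ∫ s dμ(s) < ∞, and let λ > 0 with Z_λ < ∞. Define the mixture m(x) = ∫ I_φ(s)(x) dμ(s). Let f : ℕ → ℝ be integrable with respect to I_φ(λ), with respect to I_φ(s) for μ-almost every s, and with respect to m, and let g : ℕ → ℝ be a bounded solution of the Stein equation for f with respect to I_φ(λ). Then |Σ_x f(x) m(x) − Σ_x f(x) I_φ(λ)(x)| ≤ (∫ |λ − s| dμ(s)) · sup_{x ∈ ℕ} |g(x)|. -/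

import Mathlib

open MeasureTheory
open scoped BigOperators

/-- The product `φ(1)⋯φ(x)` (empty product equal to `1`). -/
noncomputable def phiProd (φ : ℕ → ℝ) (x : ℕ) : ℝ := ∏ i ∈ Finset.range x, φ (i + 1)

/-- Normalizing constant `Z_λ = Σ_{x≥0} λ^x / (φ(1)⋯φ(x))`. -/
noncomputable def Zphi (φ : ℕ → ℝ) (lam : ℝ) : ℝ := ∑' x : ℕ, lam ^ x / phiProd φ x

/-- The probability measure `I_φ(λ)(x) = Z_λ⁻¹ λ^x / (φ(1)⋯φ(x))`. -/
noncomputable def Iphi (φ : ℕ → ℝ) (lam : ℝ) (x : ℕ) : ℝ :=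
  (lam ^ x / phiProd φ x) / Zphi φ lam

section aux

variable {φ : ℕ → ℝ}

lemma phiProd_pos (hφ : ∀ x : ℕ, 1 ≤ x → 0 < φ x) (x : ℕ) : 0 < phiProd φ x :=
  Finset.prod_pos fun i _ => hφ (i + 1) (by omega)

lemma phiProd_succ (x : ℕ) : phiProd φ (x + 1) = phiProd φ x * φ (x + 1) :=
  Finset.prod_range_succ _ _

lemma term_nonneg (hφ : ∀ x : ℕ, 1 ≤ x → 0 < φ x) {s : ℝ} (hs : 0 ≤ s) (x : ℕ) :
    0 ≤ s ^ x / phiProd φ x :=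
  div_nonneg (pow_nonneg hs x) (phiProd_pos hφ x).le

lemma Zphi_nonneg (hφ : ∀ x : ℕ, 1 ≤ x → 0 < φ x) {s : ℝ} (hs : 0 ≤ s) :
    0 ≤ Zphi φ s :=
  tsum_nonneg (term_nonneg hφ hs)

lemma Zphi_pos (hφ : ∀ x : ℕ, 1 ≤ x → 0 < φ x) {s : ℝ} (hs : 0 ≤ s)
    (hsum : Summable fun x : ℕ => s ^ x / phiProd φ x) : 0 < Zphi φ s := by
  have h0 : (1 : ℝ) ≤ Zphi φ s := by
    have := Summable.le_tsum hsum 0 (fun j _ => term_nonneg hφ hs j)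
    simpa [phiProd, Zphi] using this
  linarith

lemma Iphi_nonneg (hφ : ∀ x : ℕ, 1 ≤ x → 0 < φ x) {s : ℝ} (hs : 0 ≤ s) (x : ℕ) :
    0 ≤ Iphi φ s x :=
  div_nonneg (term_nonneg hφ hs x) (Zphi_nonneg hφ hs)

lemma Iphi_le_one (hφ : ∀ x : ℕ, 1 ≤ x → 0 < φ x) {s : ℝ} (hs : 0 ≤ s)
    (hsum : Summable fun x : ℕ => s ^ x / phiProd φ x) (x : ℕ) : Iphi φ s x ≤ 1 := by
  have hZ := Zphi_pos hφ hs hsum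
  rw [Iphi, div_le_one hZ]
  exact Summable.le_tsum hsum x (fun j _ => term_nonneg hφ hs j)

lemma Iphi_summable (hsum : Summable fun x : ℕ => s ^ x / phiProd φ x) :
    Summable fun x : ℕ => Iphi φ s x :=
  hsum.div_const _

lemma Iphi_tsum_one (hφ : ∀ x : ℕ, 1 ≤ x → 0 < φ x) {s : ℝ} (hs : 0 ≤ s)
    (hsum : Summable fun x : ℕ => s ^ x / phiProd φ x) :
    ∑' x : ℕ, Iphi φ s x = 1 := by
  have hZ := Zphi_pos hφ hs hsum
  simp_rw [Iphi]
  rw [tsum_div_const]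
  exact div_self hZ.ne'

/-- The recurrence `φ(x+1) * Iphi s (x+1) = s * Iphi s x`. -/
lemma Iphi_rec (hφ : ∀ x : ℕ, 1 ≤ x → 0 < φ x) (s : ℝ) (x : ℕ) :
    φ (x + 1) * Iphi φ s (x + 1) = s * Iphi φ s x := by
  have hp := phiProd_pos hφ x
  have hp1 := hφ (x + 1) (by omega)
  rw [Iphi, Iphi, phiProd_succ, pow_succ]
  rw [← div_div (s ^ x * s), div_right_comm,
    mul_comm (φ (x + 1)), div_mul_cancel₀ _ hp1.ne']
  ring

end aux

lemma tsum_eq_pos_sub_neg {q : ℕ → ℝ} (h : Summable fun x => |q x|) :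
    ∑' x, q x
      = (∑' x, ENNReal.ofReal (q x)).toReal - (∑' x, ENNReal.ofReal (-(q x))).toReal := by
  have hpos : Summable fun x => max (q x) 0 :=
    Summable.of_nonneg_of_le (fun x => le_max_right _ _)
      (fun x => max_le (le_abs_self _) (abs_nonneg _)) h
  have hneg : Summable fun x => max (-(q x)) 0 :=
    Summable.of_nonneg_of_le (fun x => le_max_right _ _)
      (fun x => max_le (neg_le_abs _) (abs_nonneg _)) h
  have htr : ∀ a : ℝ, (ENNReal.ofReal a).toReal = max a 0 := fun a => by
    rw [ENNReal.ofReal, ENNReal.coe_toReal, Real.coe_toNNReal']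
  rw [ENNReal.tsum_toReal_eq (fun _ => ENNReal.ofReal_ne_top),
    ENNReal.tsum_toReal_eq (fun _ => ENNReal.ofReal_ne_top)]
  simp_rw [htr]
  rw [← Summable.tsum_sub hpos hneg]
  refine tsum_congr fun x => ?_
  rcases le_total (q x) 0 with hx | hx
  · rw [max_eq_right hx, max_eq_left (neg_nonneg.2 hx)]; ring
  · rw [max_eq_left hx, max_eq_right (neg_nonpos.2 hx)]; ring

lemma stein_bound {φ : ℕ → ℝ} (hφ0 : φ 0 = 0) (hφ : ∀ x : ℕ, 1 ≤ x → 0 < φ x)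
    (lam : ℝ) (f g : ℕ → ℝ) (B C : ℝ)
    (hg : ∀ x : ℕ, lam * g (x + 1) - φ x * g x = f x - B)
    (hC : ∀ x, |g x| ≤ C)
    {s : ℝ} (hs : 0 < s) (hsum : Summable fun x : ℕ => s ^ x / phiProd φ x)
    (hfs : Summable fun x : ℕ => |f x| * Iphi φ s x) :
    |(∑' x : ℕ, f x * Iphi φ s x) - B| ≤ |lam - s| * C := by
  set I : ℕ → ℝ := fun x => Iphi φ s x with hI
  have hInn : ∀ x, 0 ≤ I x := Iphi_nonneg hφ hs.le
  have hIsum : Summable I := Iphi_summable hsum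
  have hIone : ∑' x, I x = 1 := Iphi_tsum_one hφ hs.le hsum
  have hfI : Summable fun x => f x * I x := by
    refine Summable.of_abs ?_
    have : (fun x => |f x * I x|) = fun x => |f x| * I x := by
      funext x; rw [abs_mul, abs_of_nonneg (hInn x)]
    rw [this]; exact hfs
  have hgI : Summable fun x => g (x + 1) * I x := by
    refine Summable.of_abs ?_
    refine Summable.of_nonneg_of_le (fun x => abs_nonneg _)
      (fun x => ?_) (hIsum.mul_left C)
    rw [abs_mul, abs_of_nonneg (hInn x)]
    exact mul_le_mul_of_nonneg_right (hC _) (hInn x)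
  set S1 : ℝ := ∑' x, g (x + 1) * I x with hS1
  have hC0 : 0 ≤ C := (abs_nonneg _).trans (hC 0)
  have hS1le : |S1| ≤ C := by
    have h1 : |S1| ≤ ∑' x, |g (x + 1) * I x| := by
      have := norm_tsum_le_tsum_norm (f := fun x => g (x + 1) * I x) (by
        simp only [Real.norm_eq_abs]; exact hgI.abs)
      simp only [Real.norm_eq_abs] at this
      exact this
    have h2 : ∑' x, |g (x + 1) * I x| ≤ ∑' x, C * I x := by
      refine Summable.tsum_le_tsum (fun x => ?_) hgI.abs (hIsum.mul_left C)
      rw [abs_mul, abs_of_nonneg (hInn x)]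
      exact mul_le_mul_of_nonneg_right (hC _) (hInn x)
    calc |S1| ≤ ∑' x, C * I x := h1.trans h2
    _ = C := by rw [tsum_mul_left, hIone, mul_one]
  have hshift : ∀ x : ℕ, φ (x + 1) * g (x + 1) * I (x + 1) = s * (g (x + 1) * I x) := by
    intro x
    have := Iphi_rec hφ s x (φ := φ)
    calc φ (x + 1) * g (x + 1) * I (x + 1) = g (x + 1) * (φ (x + 1) * I (x + 1)) := by ring
    _ = g (x + 1) * (s * I x) := by rw [this]
    _ = s * (g (x + 1) * I x) := by ring
  have hφgI : Summable fun x => φ x * g x * I x := by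
    refine (summable_nat_add_iff 1).1 ?_
    have : (fun x : ℕ => φ (x + 1) * g (x + 1) * I (x + 1))
        = fun x => s * (g (x + 1) * I x) := funext hshift
    rw [this]; exact hgI.mul_left s
  have key1 : ∑' x, φ x * g x * I x = s * S1 := by
    rw [Summable.tsum_eq_zero_add hφgI]
    simp only [hφ0, zero_mul, zero_add]
    calc ∑' x, φ (x + 1) * g (x + 1) * I (x + 1) = ∑' x, s * (g (x + 1) * I x) :=
      tsum_congr hshift
    _ = s * S1 := tsum_mul_left
  have key2 : (∑' x, f x * I x) - B = (lam - s) * S1 := by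
    have e1 : (∑' x, f x * I x) - B = ∑' x, (f x * I x - B * I x) := by
      rw [Summable.tsum_sub hfI (hIsum.mul_left B), tsum_mul_left, hIone, mul_one]
    have e2 : ∀ x, f x * I x - B * I x = lam * (g (x + 1) * I x) - φ x * g x * I x := by
      intro x
      have := hg x
      have hfx : f x = lam * g (x + 1) - φ x * g x + B := by linarith
      rw [hfx]; ring
    rw [e1, tsum_congr e2, Summable.tsum_sub ((hgI.mul_left lam)) hφgI, tsum_mul_left, key1]
    ring
  rw [key2, abs_mul]
  exact mul_le_mul_of_nonneg_left hS1le (abs_nonneg _)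

/-- Biased approximation of mixed `I_φ(λ)` laws: if `m` is the μ-mixture of the laws
`I_φ(s)` and `g` is a bounded solution of the Stein equation for `f` with respect to
`I_φ(λ)`, then `|Σ f dm − Σ f dI_φ(λ)| ≤ (∫ |λ − s| dμ) · sup_x |g(x)|`. -/
theorem Iphi_mixture_biased (φ : ℕ → ℝ) (hφ0 : φ 0 = 0)
    (hφ : ∀ x : ℕ, 1 ≤ x → 0 < φ x)
    (μ : Measure ℝ) [IsProbabilityMeasure μ]
    (hμpos : ∀ᵐ s ∂μ, 0 < s)
    (hZae : ∀ᵐ s ∂μ, Summable fun x : ℕ => s ^ x / phiProd φ x)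
    (hμint : Integrable (fun s : ℝ => s) μ)
    (lam : ℝ) (hlam : 0 < lam)
    (hZ : Summable fun x : ℕ => lam ^ x / phiProd φ x)
    (m : ℕ → ℝ) (hm : ∀ x : ℕ, m x = ∫ s, Iphi φ s x ∂μ)
    (f : ℕ → ℝ)
    (hf : Summable fun x : ℕ => |f x| * Iphi φ lam x)
    (hfs : ∀ᵐ s ∂μ, Summable fun x : ℕ => |f x| * Iphi φ s x)
    (hfm : Summable fun x : ℕ => |f x| * m x)
    (g : ℕ → ℝ)
    (hg : ∀ x : ℕ, lam * g (x + 1) - φ x * g x = f x - ∑' y : ℕ, f y * Iphi φ lam y)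
    (hgbd : BddAbove (Set.range fun x : ℕ => |g x|)) :
    |(∑' x : ℕ, f x * m x) - ∑' x : ℕ, f x * Iphi φ lam x| ≤
      (∫ s, |lam - s| ∂μ) * ⨆ x : ℕ, |g x| := by
  set B : ℝ := ∑' y : ℕ, f y * Iphi φ lam y with hB
  set C : ℝ := ⨆ x : ℕ, |g x| with hCdef
  have hCx : ∀ x, |g x| ≤ C := fun x => le_ciSup hgbd x
  have hC0 : 0 ≤ C := (abs_nonneg _).trans (hCx 0)
  -- measurable version of `Iphi φ · x`
  set G : ℕ → ℝ → ℝ := fun x s =>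
    (s ^ x / phiProd φ x) / (∑' y : ℕ, ENNReal.ofReal (s ^ y / phiProd φ y)).toReal with hGdef
  have hGmeas : ∀ x, Measurable (G x) := by
    intro x
    exact ((measurable_id.pow_const x).div_const _).div
      ((Measurable.ennreal_tsum fun y =>
        ENNReal.measurable_ofReal.comp ((measurable_id.pow_const y).div_const _)).ennreal_toReal)
  -- the good a.e. set
  have hae : ∀ᵐ s ∂μ, 0 < s ∧ (Summable fun x : ℕ => s ^ x / phiProd φ x)
      ∧ Summable fun x : ℕ => |f x| * Iphi φ s x := hμpos.and (hZae.and hfs)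
  have hGeq : ∀ s : ℝ, 0 < s → (Summable fun x : ℕ => s ^ x / phiProd φ x) →
      ∀ x, G x s = Iphi φ s x := by
    intro s hs hsum x
    have h1 : ENNReal.ofReal (Zphi φ s) = ∑' y : ℕ, ENNReal.ofReal (s ^ y / phiProd φ y) :=
      ENNReal.ofReal_tsum_of_nonneg (term_nonneg hφ hs.le) hsum
    have h2 : (∑' y : ℕ, ENNReal.ofReal (s ^ y / phiProd φ y)).toReal = Zphi φ s := by
      rw [← h1, ENNReal.toReal_ofReal (Zphi_nonneg hφ hs.le)]
    simp only [hGdef, h2, Iphi]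
  have hGae : ∀ x : ℕ, (fun s => G x s) =ᵐ[μ] fun s => Iphi φ s x := by
    intro x
    filter_upwards [hae] with s hs
    exact hGeq s hs.1 hs.2.1 x
  have hq : ∀ x : ℕ, AEStronglyMeasurable (fun s => f x * Iphi φ s x) μ := by
    intro x
    exact (((hGmeas x).const_mul (f x)).aestronglyMeasurable).congr
      ((hGae x).mono fun s hs => by show f x * G x s = _; rw [show G x s = Iphi φ s x from hs])
  have hIasm : ∀ x : ℕ, AEStronglyMeasurable (fun s => Iphi φ s x) μ := fun x =>
    ((hGmeas x).aestronglyMeasurable).congr (hGae x)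
  have hIint : ∀ x : ℕ, Integrable (fun s => Iphi φ s x) μ := by
    intro x
    refine Integrable.mono' (integrable_const (1 : ℝ)) (hIasm x) ?_
    filter_upwards [hae] with s hs
    rw [Real.norm_eq_abs, abs_of_nonneg (Iphi_nonneg hφ hs.1.le x)]
    exact Iphi_le_one hφ hs.1.le hs.2.1 x
  have hmnn : ∀ x, 0 ≤ m x := by
    intro x
    rw [hm x]
    refine integral_nonneg_of_ae ?_
    filter_upwards [hμpos] with s hs
    exact Iphi_nonneg hφ hs.le x
  -- lintegral bound for the interchange
  have hlint : ∀ x : ℕ, ∫⁻ s, ‖f x * Iphi φ s x‖₊ ∂μ = ENNReal.ofReal (|f x| * m x) := by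
    intro x
    have h1 : Integrable (fun s => |f x| * Iphi φ s x) μ := (hIint x).const_mul _
    have h2 : ENNReal.ofReal (∫ s, |f x| * Iphi φ s x ∂μ)
        = ∫⁻ s, ENNReal.ofReal (|f x| * Iphi φ s x) ∂μ := by
      refine ofReal_integral_eq_lintegral_ofReal h1 ?_
      filter_upwards [hμpos] with s hs
      exact mul_nonneg (abs_nonneg _) (Iphi_nonneg hφ hs.le x)
    have h3 : ∫ s, |f x| * Iphi φ s x ∂μ = |f x| * m x := by
      rw [integral_const_mul, hm x]
    have h4 : ∫⁻ s, ‖f x * Iphi φ s x‖₊ ∂μ = ∫⁻ s, ENNReal.ofReal (|f x| * Iphi φ s x) ∂μ := by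
      refine lintegral_congr_ae ?_
      filter_upwards [hμpos] with s hs
      rw [← enorm_eq_nnnorm, ← ofReal_norm, Real.norm_eq_abs, abs_mul,
        abs_of_nonneg (Iphi_nonneg hφ hs.le x)]
    rw [h4, ← h2, h3]
  have hlintsum : (∑' x : ℕ, ∫⁻ s, ‖f x * Iphi φ s x‖₊ ∂μ) ≠ ⊤ := by
    simp_rw [hlint]
    rw [← ENNReal.ofReal_tsum_of_nonneg (fun x => mul_nonneg (abs_nonneg _) (hmnn x)) hfm]
    exact ENNReal.ofReal_ne_top
  -- interchange of sum and integral
  have hswap : ∫ s, (∑' x : ℕ, f x * Iphi φ s x) ∂μ = ∑' x : ℕ, f x * m x := by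
    rw [integral_tsum hq hlintsum]
    refine tsum_congr fun x => ?_
    rw [integral_const_mul, hm x]
  set T : ℝ → ℝ := fun s => ∑' x : ℕ, f x * Iphi φ s x with hT
  -- per-s Stein bound
  have hTbd : ∀ᵐ s ∂μ, |T s - B| ≤ |lam - s| * C := by
    filter_upwards [hae] with s hs
    exact stein_bound hφ0 hφ lam f g B C (fun x => hg x) hCx hs.1 hs.2.1 hs.2.2
  -- T is a.e. strongly measurable
  set Tm : ℝ → ℝ := fun s => (∑' x : ℕ, ENNReal.ofReal (f x * G x s)).toReal
      - (∑' x : ℕ, ENNReal.ofReal (-(f x * G x s))).toReal with hTmdef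
  have hTm : Measurable Tm := by
    refine Measurable.sub ?_ ?_
    · exact (Measurable.ennreal_tsum fun x =>
        ENNReal.measurable_ofReal.comp ((hGmeas x).const_mul (f x))).ennreal_toReal
    · exact (Measurable.ennreal_tsum fun x =>
        ENNReal.measurable_ofReal.comp (((hGmeas x).const_mul (f x)).neg)).ennreal_toReal
  have hTeq : T =ᵐ[μ] Tm := by
    filter_upwards [hae] with s hs
    have hGs : ∀ x, G x s = Iphi φ s x := hGeq s hs.1 hs.2.1
    have habs : Summable fun x : ℕ => |f x * Iphi φ s x| := by
      have : (fun x : ℕ => |f x * Iphi φ s x|) = fun x => |f x| * Iphi φ s x := by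
        funext x; rw [abs_mul, abs_of_nonneg (Iphi_nonneg hφ hs.1.le x)]
      rw [this]; exact hs.2.2
    have := tsum_eq_pos_sub_neg habs
    simp only [hT, hTmdef]
    simp_rw [hGs]
    exact this
  have hTasm : AEStronglyMeasurable T μ := hTm.aestronglyMeasurable.congr hTeq.symm
  have habsint : Integrable (fun s => |lam - s|) μ := ((integrable_const lam).sub hμint).abs
  have hTint : Integrable T μ := by
    refine Integrable.mono' (g := fun s => |B| + C * |lam - s|)
      ((integrable_const _).add (habsint.const_mul C)) hTasm ?_
    filter_upwards [hTbd] with s hs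
    rw [Real.norm_eq_abs]
    have : |T s| ≤ |T s - B| + |B| := by
      have := abs_sub_abs_le_abs_sub (T s) B
      have h2 := abs_add_le (T s - B) B
      calc |T s| = |T s - B + B| := by ring_nf
      _ ≤ |T s - B| + |B| := abs_add_le _ _
    calc |T s| ≤ |T s - B| + |B| := this
    _ ≤ |lam - s| * C + |B| := by linarith
    _ = |B| + C * |lam - s| := by ring
  -- put everything together
  have hBint : Integrable (fun _ : ℝ => B) μ := integrable_const B
  have hmain : (∑' x : ℕ, f x * m x) - B = ∫ s, (T s - B) ∂μ := by
    rw [integral_sub hTint hBint, integral_const, probReal_univ, one_smul,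
      hswap]
  rw [hmain]
  have h1 : |∫ s, (T s - B) ∂μ| ≤ ∫ s, |T s - B| ∂μ := by
    simpa [Real.norm_eq_abs] using norm_integral_le_integral_norm (fun s => T s - B) (μ := μ)
  refine h1.trans ?_
  have h2 : ∫ s, |T s - B| ∂μ ≤ ∫ s, |lam - s| * C ∂μ :=
    integral_mono_ae (hTint.sub hBint).abs (habsint.mul_const C) hTbd
  refine h2.trans ?_
  rw [integral_mul_const]
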